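/- Every sequentially distorted subset of a group is strongly bounded: if A ⊆ G admits a sequence {w_n} ⊆ ℕ such that for every sequence {a_n} ⊆ A there exists a finite set S ⊆ G with a_n ∈ S^{w_n} for all n, then A has finite diameter in every left-invariant metric on G. -/

import Mathlib

open Pointwise

/-- `d` is a left-invariant metric on the group `G`. -/
def IsLeftInvMetric {G : Type*} [Group G] (d : G → G → ℝ) : Prop :=
  (∀ x y, d x y = 0 ↔ x = y) ∧ (∀ x y, d x y = d y x) ∧
    (∀ x y z, d x z ≤ d x y + d y z) ∧ (∀ k x y, d (k * x) (k * y) = d x y)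

/-- `d` is a left-invariant pseudo-metric on the group `G`. -/
def IsLeftInvPseudoMetric {G : Type*} [Group G] (d : G → G → ℝ) : Prop :=
  (∀ x, d x x = 0) ∧ (∀ x y, d x y = d y x) ∧
    (∀ x y z, d x z ≤ d x y + d y z) ∧ (∀ k x y, d (k * x) (k * y) = d x y)

/-- A subset of a group is strongly bounded if it has finite diameter in every
left-invariant metric on the group. -/
def StronglyBounded {G : Type*} [Group G] (A : Set G) : Prop :=
  ∀ d : G → G → ℝ, IsLeftInvMetric d → ∃ D : ℝ, ∀ a ∈ A, ∀ b ∈ A, d a b ≤ D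

/-- The word length of `g` with respect to `S`: the least `n` with `g ∈ S^n`. -/
noncomputable def wordLength {G : Type*} [Group G] (S : Set G) (g : G) : ℕ :=
  sInf {n : ℕ | g ∈ S ^ n}

/-- The word metric associated to a generating set `S`. -/
noncomputable def wordMetric {G : Type*} [Group G] (S : Set G) (g h : G) : ℝ :=
  (wordLength S (h⁻¹ * g) : ℝ)

/-- A subset `A` of a group is sequentially distorted. -/
def SeqDistorted {G : Type*} [Group G] (A : Set G) : Prop :=
  ∃ w : ℕ → ℕ, ∀ a : ℕ → G, (∀ n, a n ∈ A) →
    ∃ S : Set G, S.Finite ∧ ∀ n, a n ∈ S ^ (w n)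

lemma pow_len_bound {G : Type*} [Group G] (d : G → G → ℝ) (hd : IsLeftInvMetric d)
    (S : Set G) (M : ℝ) (hM : ∀ s ∈ S, d 1 s ≤ M) (hM0 : 0 ≤ M) :
    ∀ k : ℕ, ∀ g ∈ S ^ k, d 1 g ≤ k * M := by
  obtain ⟨heq, hsymm, htri, hinv⟩ := hd
  intro k
  induction k with
  | zero =>
    intro g hg
    simp only [pow_zero, Set.mem_one] at hg
    subst hg
    simp [(heq 1 1).mpr rfl]
  | succ n ih =>
    intro g hg
    rw [pow_succ] at hg
    obtain ⟨x, hx, s, hs, rfl⟩ := hg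
    have h1 : d 1 (x * s) ≤ d 1 x + d x (x * s) := htri _ _ _
    have h2 : d x (x * s) = d 1 s := by
      have := hinv x 1 s
      simpa using this
    have := ih x hx
    have := hM s hs
    push_cast
    linarith [h1, h2]

theorem stmt8 {G : Type*} [Group G] (A : Set G) (hA : SeqDistorted A) :
    StronglyBounded A := by
  intro d hd
  by_contra hcon
  push_neg at hcon
  obtain ⟨w, hw⟩ := hA
  have h' : ∀ n : ℕ, ∃ a ∈ A, ∃ b ∈ A,
      ((n : ℝ) * ((w (2 * n) : ℝ) + (w (2 * n + 1) : ℝ) + 1)) < d a b := by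
    intro n
    obtain ⟨a, ha, b, hb, hab⟩ := hcon ((n : ℝ) * ((w (2 * n) : ℝ) + (w (2 * n + 1) : ℝ) + 1))
    exact ⟨a, ha, b, hb, hab⟩
  choose a ha b hb hab using h'
  set c : ℕ → G := fun n => if n % 2 = 0 then a (n / 2) else b (n / 2) with hc
  have hcA : ∀ n, c n ∈ A := by
    intro n
    simp only [hc]
    split <;> [exact ha _; exact hb _]
  obtain ⟨S, hSfin, hS⟩ := hw c hcA
  obtain ⟨M, hM⟩ := (hSfin.image (d 1)).bddAbove
  set M' : ℝ := max M 0 with hM'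
  have hM'0 : 0 ≤ M' := le_max_right _ _
  have hMb : ∀ s ∈ S, d 1 s ≤ M' := fun s hs =>
    le_trans (hM (Set.mem_image_of_mem _ hs)) (le_max_left _ _)
  have key := pow_len_bound d hd S M' hMb hM'0
  set n : ℕ := ⌈M'⌉₊ + 1 with hn
  have hnM : M' < n := by
    have := Nat.le_ceil M'
    have : (⌈M'⌉₊ : ℝ) < n := by rw [hn]; push_cast; linarith
    linarith [Nat.le_ceil M']
  have hca : c (2 * n) = a n := by
    simp only [hc]
    norm_num [Nat.mul_div_cancel_left]
  have hcb : c (2 * n + 1) = b n := by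
    simp only [hc]
    have h1 : (2 * n + 1) % 2 = 1 := by omega
    have h2 : (2 * n + 1) / 2 = n := by omega
    simp [h1, h2]
  have hda : d 1 (a n) ≤ (w (2 * n) : ℝ) * M' := by
    have := key (w (2 * n)) (c (2 * n)) (hS (2 * n))
    rwa [hca] at this
  have hdb : d 1 (b n) ≤ (w (2 * n + 1) : ℝ) * M' := by
    have := key (w (2 * n + 1)) (c (2 * n + 1)) (hS (2 * n + 1))
    rwa [hcb] at this
  obtain ⟨heq, hsymm, htri, hinv⟩ := hd
  have htr : d (a n) (b n) ≤ d 1 (a n) + d 1 (b n) := by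
    have := htri (a n) 1 (b n)
    rw [hsymm (a n) 1] at this
    linarith
  have hlow := hab n
  have hn1 : (1 : ℝ) ≤ (n : ℝ) := by exact_mod_cast Nat.one_le_iff_ne_zero.mpr (by omega)
  have hfinal : d (a n) (b n) ≤ ((w (2 * n) : ℝ) + (w (2 * n + 1) : ℝ)) * M' := by
    linarith [htr, hda, hdb]
  have hW0 : (0 : ℝ) ≤ (w (2 * n) : ℝ) + (w (2 * n + 1) : ℝ) := by positivity
  nlinarith [hfinal, hlow, mul_le_mul_of_nonneg_left (le_of_lt hnM) hW0]
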